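/- For an MDP with transition kernel P and any two policies π and π̄, the total variation distance between the induced state-marginal distributions at time step h satisfies D_TV(ρ^π_h, ρ^π̄_h) ≤ (h+1)·max_s D_TV(π(·|s), π̄(·|s)), where ρ^π_h is the state-action distribution at step h under policy π starting from a common initial distribution. -/

import Mathlib

open Finset

/-- State marginal distribution at step `h` under transition kernel `P`,
policy `π`, and initial distribution `μ`. -/
def stateDist {S A : Type*} [Fintype S] [Fintype A]
    (P : S → A → S → ℝ) (π : S → A → ℝ) (μ : S → ℝ) : ℕ → S → ℝ
  | 0 => μ
  | h + 1 => fun s' => ∑ s, ∑ a, stateDist P π μ h s * π s a * P s a s'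

/-- State-action distribution at step `h`. -/
def saDist {S A : Type*} [Fintype S] [Fintype A]
    (P : S → A → S → ℝ) (π : S → A → ℝ) (μ : S → ℝ) (h : ℕ) (s : S) (a : A) : ℝ :=
  stateDist P π μ h s * π s a

lemma stateDist_nonneg {S A : Type*} [Fintype S] [Fintype A]
    (P : S → A → S → ℝ) (π : S → A → ℝ) (μ : S → ℝ)
    (hP : ∀ s a s', 0 ≤ P s a s') (hπ : ∀ s a, 0 ≤ π s a) (hμ : ∀ s, 0 ≤ μ s) :
    ∀ h s, 0 ≤ stateDist P π μ h s := by
  intro h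
  induction h with
  | zero => exact hμ
  | succ n ih =>
    intro s'
    simp only [stateDist]
    refine Finset.sum_nonneg fun s _ => Finset.sum_nonneg fun a _ => ?_
    exact mul_nonneg (mul_nonneg (ih s) (hπ s a)) (hP s a s')

lemma stateDist_sum {S A : Type*} [Fintype S] [Fintype A]
    (P : S → A → S → ℝ) (π : S → A → ℝ) (μ : S → ℝ)
    (hPsum : ∀ s a, ∑ s', P s a s' = 1) (hπsum : ∀ s, ∑ a, π s a = 1)
    (hμsum : ∑ s, μ s = 1) :
    ∀ h, ∑ s, stateDist P π μ h s = 1 := by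
  intro h
  induction h with
  | zero => exact hμsum
  | succ n ih =>
    simp only [stateDist]
    rw [Finset.sum_comm]
    calc ∑ s, ∑ s', ∑ a, stateDist P π μ n s * π s a * P s a s'
        = ∑ s, stateDist P π μ n s := by
          refine Finset.sum_congr rfl fun s _ => ?_
          rw [Finset.sum_comm]
          calc ∑ a, ∑ s', stateDist P π μ n s * π s a * P s a s'
              = ∑ a, stateDist P π μ n s * π s a := by
                refine Finset.sum_congr rfl fun a _ => ?_
                rw [← Finset.mul_sum, hPsum, mul_one]
            _ = stateDist P π μ n s := by rw [← Finset.mul_sum, hπsum, mul_one]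
      _ = 1 := ih

/-- SA TV ≤ state TV + ε -/
lemma sa_decomp {S A : Type*} [Fintype S] [Fintype A]
    (P : S → A → S → ℝ) (π πbar : S → A → ℝ) (μ : S → ℝ) (ε : ℝ)
    (hP : ∀ s a s', 0 ≤ P s a s')
    (hπ : ∀ s a, 0 ≤ π s a) (hπsum : ∀ s, ∑ a, π s a = 1)
    (hπbar : ∀ s a, 0 ≤ πbar s a)
    (hPsum : ∀ s a, ∑ s', P s a s' = 1) (hπbarsum : ∀ s, ∑ a, πbar s a = 1)
    (hμ : ∀ s, 0 ≤ μ s) (hμsum : ∑ s, μ s = 1)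
    (hε : ∀ s, (1 / 2) * ∑ a, |π s a - πbar s a| ≤ ε) (h : ℕ) :
    (1 / 2) * ∑ s, ∑ a, |saDist P π μ h s a - saDist P πbar μ h s a| ≤
      (1 / 2) * ∑ s, |stateDist P π μ h s - stateDist P πbar μ h s| + ε := by
  have hbnn := stateDist_nonneg P πbar μ hP hπbar hμ h
  have hbsum := stateDist_sum P πbar μ hPsum hπbarsum hμsum h
  set d := stateDist P π μ h with hd
  set db := stateDist P πbar μ h with hdb
  have key : ∀ s, ∑ a, |saDist P π μ h s a - saDist P πbar μ h s a| ≤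
      |d s - db s| + db s * (2 * ε) := by
    intro s
    have step : ∀ a, |saDist P π μ h s a - saDist P πbar μ h s a| ≤
        |d s - db s| * π s a + db s * |π s a - πbar s a| := by
      intro a
      have : saDist P π μ h s a - saDist P πbar μ h s a =
          (d s - db s) * π s a + db s * (π s a - πbar s a) := by
        simp only [saDist, ← hd, ← hdb]; ring
      rw [this]
      calc |(d s - db s) * π s a + db s * (π s a - πbar s a)|
          ≤ |(d s - db s) * π s a| + |db s * (π s a - πbar s a)| := abs_add_le _ _
        _ = |d s - db s| * π s a + db s * |π s a - πbar s a| := by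
            rw [abs_mul, abs_mul, abs_of_nonneg (hπ s a), abs_of_nonneg (hbnn s)]
    calc ∑ a, |saDist P π μ h s a - saDist P πbar μ h s a|
        ≤ ∑ a, (|d s - db s| * π s a + db s * |π s a - πbar s a|) :=
          Finset.sum_le_sum fun a _ => step a
      _ = |d s - db s| + db s * ∑ a, |π s a - πbar s a| := by
          rw [Finset.sum_add_distrib, ← Finset.mul_sum, ← Finset.mul_sum, hπsum, mul_one]
      _ ≤ |d s - db s| + db s * (2 * ε) := by
          have := hε s
          have h2 : ∑ a, |π s a - πbar s a| ≤ 2 * ε := by linarith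
          exact add_le_add_right (mul_le_mul_of_nonneg_left h2 (hbnn s)) _
  calc (1 / 2) * ∑ s, ∑ a, |saDist P π μ h s a - saDist P πbar μ h s a|
      ≤ (1 / 2) * ∑ s, (|d s - db s| + db s * (2 * ε)) := by
        have := Finset.sum_le_sum fun s (_ : s ∈ Finset.univ) => key s
        linarith
    _ = (1 / 2) * ∑ s, |d s - db s| + ε := by
        rw [Finset.sum_add_distrib, ← Finset.sum_mul, hbsum]; ring

lemma state_tv {S A : Type*} [Fintype S] [Fintype A]
    (P : S → A → S → ℝ) (π πbar : S → A → ℝ) (μ : S → ℝ) (ε : ℝ)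
    (hP : ∀ s a s', 0 ≤ P s a s') (hPsum : ∀ s a, ∑ s', P s a s' = 1)
    (hπ : ∀ s a, 0 ≤ π s a) (hπsum : ∀ s, ∑ a, π s a = 1)
    (hπbar : ∀ s a, 0 ≤ πbar s a) (hπbarsum : ∀ s, ∑ a, πbar s a = 1)
    (hμ : ∀ s, 0 ≤ μ s) (hμsum : ∑ s, μ s = 1)
    (hε : ∀ s, (1 / 2) * ∑ a, |π s a - πbar s a| ≤ ε) :
    ∀ h : ℕ, (1 / 2) * ∑ s, |stateDist P π μ h s - stateDist P πbar μ h s| ≤ h * ε := by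
  intro h
  induction h with
  | zero => simp [stateDist]
  | succ n ih =>
    have hsa := sa_decomp P π πbar μ ε hP hπ hπsum hπbar hPsum hπbarsum hμ hμsum hε n
    have step : (1 / 2) * ∑ s', |stateDist P π μ (n+1) s' - stateDist P πbar μ (n+1) s'| ≤
        (1 / 2) * ∑ s, ∑ a, |saDist P π μ n s a - saDist P πbar μ n s a| := by
      have pt : ∀ s', |stateDist P π μ (n+1) s' - stateDist P πbar μ (n+1) s'| ≤
          ∑ s, ∑ a, |saDist P π μ n s a - saDist P πbar μ n s a| * P s a s' := by
        intro s'
        have : stateDist P π μ (n+1) s' - stateDist P πbar μ (n+1) s' =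
            ∑ s, ∑ a, (saDist P π μ n s a - saDist P πbar μ n s a) * P s a s' := by
          simp only [stateDist, saDist, ← Finset.sum_sub_distrib]
          refine Finset.sum_congr rfl fun s _ => Finset.sum_congr rfl fun a _ => ?_
          ring
        rw [this]
        calc |∑ s, ∑ a, (saDist P π μ n s a - saDist P πbar μ n s a) * P s a s'|
            ≤ ∑ s, |∑ a, (saDist P π μ n s a - saDist P πbar μ n s a) * P s a s'| :=
              Finset.abs_sum_le_sum_abs _ _
          _ ≤ ∑ s, ∑ a, |(saDist P π μ n s a - saDist P πbar μ n s a) * P s a s'| :=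
              Finset.sum_le_sum fun s _ => Finset.abs_sum_le_sum_abs _ _
          _ = ∑ s, ∑ a, |saDist P π μ n s a - saDist P πbar μ n s a| * P s a s' := by
              refine Finset.sum_congr rfl fun s _ => Finset.sum_congr rfl fun a _ => ?_
              rw [abs_mul, abs_of_nonneg (hP s a s')]
      have sum_pt := Finset.sum_le_sum fun s' (_ : s' ∈ Finset.univ) => pt s'
      have rearr : ∑ s' : S, ∑ s, ∑ a, |saDist P π μ n s a - saDist P πbar μ n s a| * P s a s'
          = ∑ s, ∑ a, |saDist P π μ n s a - saDist P πbar μ n s a| := by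
        rw [Finset.sum_comm]
        refine Finset.sum_congr rfl fun s _ => ?_
        rw [Finset.sum_comm]
        refine Finset.sum_congr rfl fun a _ => ?_
        rw [← Finset.mul_sum, hPsum, mul_one]
      rw [rearr] at sum_pt
      linarith
    have : ((n : ℝ) + 1) * ε = n * ε + ε := by ring
    push_cast
    linarith

theorem tv_sa_dist_le {S A : Type*} [Fintype S] [Fintype A]
    (P : S → A → S → ℝ) (π πbar : S → A → ℝ) (μ : S → ℝ) (ε : ℝ)
    (hP : ∀ s a s', 0 ≤ P s a s') (hPsum : ∀ s a, ∑ s', P s a s' = 1)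
    (hπ : ∀ s a, 0 ≤ π s a) (hπsum : ∀ s, ∑ a, π s a = 1)
    (hπbar : ∀ s a, 0 ≤ πbar s a) (hπbarsum : ∀ s, ∑ a, πbar s a = 1)
    (hμ : ∀ s, 0 ≤ μ s) (hμsum : ∑ s, μ s = 1)
    (hε : ∀ s, (1 / 2) * ∑ a, |π s a - πbar s a| ≤ ε) (h : ℕ) :
    (1 / 2) * ∑ s, ∑ a, |saDist P π μ h s a - saDist P πbar μ h s a| ≤ (h + 1) * ε := by
  have h1 := sa_decomp P π πbar μ ε hP hπ hπsum hπbar hPsum hπbarsum hμ hμsum hε h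
  have h2 := state_tv P π πbar μ ε hP hPsum hπ hπsum hπbar hπbarsum hμ hμsum hε h
  linarith
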